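/- Let μ ∈ (1,2), n ≥ 1 and b ∈ L_n, and let λ denote Lebesgue measure. Then μ^n · λ({x ∈ [0,1) : γ^n(x) = b}) = |T(b)|, where |T(b)| denotes the length of the interval T(b). -/

import Mathlib

open Set MeasureTheory Pointwise

/-- The tent map `f(x) = μx` for `x ≤ 1/2` and `μ(1-x)` for `x ≥ 1/2`. -/
noncomputable def tentMap (μ : ℝ) (x : ℝ) : ℝ :=
  if x ≤ 1/2 then μ * x else μ * (1 - x)

/-- `tentBit μ x k` is the `(k+1)`-st bit `b_{k+1}` of the tent code of `x`. -/
noncomputable def tentBit (μ x : ℝ) : ℕ → Bool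
  | 0 => if 1/2 ≤ x then true else false
  | k + 1 =>
    if (tentMap μ)^[k+1] x < 1/2 then tentBit μ x k
    else if 1/2 < (tentMap μ)^[k+1] x then !(tentBit μ x k)
    else true

/-- The tent code `γ^n(x) = b_1 ⋯ b_n`. -/
noncomputable def tentCode (μ : ℝ) (n : ℕ) (x : ℝ) : List Bool :=
  (List.range n).map (tentBit μ x)

/-- The tent language `L_n = {γ^n(x) : x ∈ [0,1)}`. -/
def tentLang (μ : ℝ) (n : ℕ) : Set (List Bool) :=
  {w | ∃ x ∈ Set.Ico (0:ℝ) 1, tentCode μ n x = w}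

/-- The segment-type `T(w) = {f^n(x) : x ∈ [0,1), γ^n(x) = w}`. -/
def segType (μ : ℝ) (n : ℕ) (w : List Bool) : Set ℝ :=
  {y | ∃ x ∈ Set.Ico (0:ℝ) 1, tentCode μ n x = w ∧ (tentMap μ)^[n] x = y}

/-- The set of segment-types `𝒯_n = {T(w) : w ∈ L_n}`. -/
def typeSet (μ : ℝ) (n : ℕ) : Set (Set ℝ) :=
  {S | ∃ w ∈ tentLang μ n, segType μ n w = S}

/-- `I_i = T(γ^i(1/2))`. -/
noncomputable def Iseg (μ : ℝ) (i : ℕ) : Set ℝ :=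
  segType μ i (tentCode μ i (1/2))

/-- `Ī_i = T(c̄_i)` where `c̄_i` is the bitwise complement of `γ^i(1/2)`. -/
noncomputable def Isegbar (μ : ℝ) (i : ℕ) : Set ℝ :=
  segType μ i ((tentCode μ i (1/2)).map (fun b => !b))

/-- The length of the interval `T(w)` (zero if `T(w)` is empty). -/
noncomputable def segLen (μ : ℝ) (n : ℕ) (w : List Bool) : ℝ :=
  (MeasureTheory.volume (segType μ n w)).toReal

lemma tentCode_succ (μ : ℝ) (n : ℕ) (x : ℝ) :
    tentCode μ (n+1) x = tentCode μ n x ++ [tentBit μ x n] := by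
  simp [tentCode, List.range_succ]

lemma bit_pattern (μ : ℝ) (n : ℕ) (x : ℝ) (w : List Bool) (h : tentCode μ n x = w) :
    tentBit μ x n = (if (tentMap μ)^[n] x < 1/2 then w.getLastD false
      else if 1/2 < (tentMap μ)^[n] x then !(w.getLastD false) else true) := by
  cases n with
  | zero =>
    have : w = [] := by simpa [tentCode] using h.symm
    subst this
    simp only [tentBit, Function.iterate_zero_apply, List.getLastD_nil]
    by_cases h1 : x < 1/2
    · simp only [if_pos h1, if_neg (not_le.mpr h1)]
      simp [h1, show x < 2⁻¹ by linarith]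
    · simp only [if_neg h1, if_pos (not_lt.mp h1)]
      simp [h1, show 2⁻¹ ≤ x by linarith [not_lt.mp h1]]
  | succ k =>
    have hlast : w.getLastD false = tentBit μ x k := by
      rw [← h, tentCode_succ]
      simp
    rw [hlast]
    rfl

lemma tentCode_length (μ : ℝ) (n : ℕ) (x : ℝ) : (tentCode μ n x).length = n := by
  simp [tentCode]

lemma tent_affine (μ : ℝ) (hμ : 0 < μ) (w : List Bool) :
    ∃ a c : ℝ, |a| = μ ^ w.length ∧
      ∀ x, tentCode μ w.length x = w → (tentMap μ)^[w.length] x = a * x + c := by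
  induction w using List.reverseRecOn with
  | nil => exact ⟨1, 0, by simp, fun x _ => by simp⟩
  | append_singleton w b IH =>
    obtain ⟨a, c, ha, hx⟩ := IH
    rw [show (w ++ [b]).length = w.length + 1 from by simp]
    set n := w.length with hn
    have key : ∀ x, tentCode μ (n+1) x = w ++ [b] →
        (tentMap μ)^[n] x = a * x + c ∧
        tentBit μ x n = b ∧ tentCode μ n x = w := by
      intro x hcode
      have h2 := (tentCode_succ μ n x).symm.trans hcode
      obtain ⟨hcw, hbit⟩ := List.append_inj h2 (by rw [tentCode_length, hn])
      refine ⟨hx x hcw, by simpa using hbit, hcw⟩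
    by_cases hb : b = w.getLastD false
    · refine ⟨μ * a, μ * c, ?_, ?_⟩
      · rw [abs_mul, ha, abs_of_pos hμ, pow_succ]; ring
      · intro x hcode
        obtain ⟨hy, hbit, hcw⟩ := key x hcode
        have hpat := bit_pattern μ n x w hcw
        rw [Function.iterate_succ_apply', hy]
        rcases lt_trichotomy (a * x + c) (1/2 : ℝ) with h1 | h1 | h1
        · rw [tentMap, if_pos h1.le]; ring
        · rw [tentMap, if_pos h1.le]; ring
        · exfalso
          rw [hy] at hpat
          rw [hpat, if_neg (not_lt.mpr h1.le), if_pos h1, hb] at hbit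
          cases w.getLastD false <;> simp_all
    · have hb' : b = !(w.getLastD false) := by
        cases hbb : b <;> cases hgg : w.getLastD false <;> simp_all
      refine ⟨-(μ * a), μ - μ * c, ?_, ?_⟩
      · rw [abs_neg, abs_mul, ha, abs_of_pos hμ, pow_succ]; ring
      · intro x hcode
        obtain ⟨hy, hbit, hcw⟩ := key x hcode
        have hpat := bit_pattern μ n x w hcw
        rw [Function.iterate_succ_apply', hy]
        rcases lt_trichotomy (a * x + c) (1/2 : ℝ) with h1 | h1 | h1
        · exfalso
          rw [hy] at hpat
          rw [hpat, if_pos h1, hb'] at hbit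
          cases w.getLastD false <;> simp_all
        · rw [tentMap, if_pos h1.le]; linear_combination 2 * μ * h1
        · rw [tentMap, if_neg (by linarith)]; ring

/-- `μ^n · λ({x ∈ [0,1) : γ^n(x) = b}) = |T(b)|`. -/
theorem tent_measure_preserving (μ : ℝ) (hμ1 : 1 < μ) (hμ2 : μ < 2)
    (n : ℕ) (hn : 1 ≤ n) (w : List Bool) (hw : w ∈ tentLang μ n) :
    μ ^ n * (volume {x ∈ Set.Ico (0:ℝ) 1 | tentCode μ n x = w}).toReal =
      segLen μ n w := by
  have hμ : (0:ℝ) < μ := lt_trans one_pos hμ1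
  obtain ⟨x₀, hx₀, hwc⟩ := hw
  have hwl : w.length = n := by rw [← hwc, tentCode_length]
  obtain ⟨a, c, ha, hx⟩ := tent_affine μ hμ w
  rw [hwl] at ha hx
  set A := {x ∈ Set.Ico (0:ℝ) 1 | tentCode μ n x = w} with hA
  have himg : segType μ n w = (fun x => a * x + c) '' A := by
    ext y
    constructor
    · rintro ⟨x, hx1, hx2, rfl⟩
      exact ⟨x, ⟨hx1, hx2⟩, (hx x hx2).symm⟩
    · rintro ⟨x, ⟨hx1, hx2⟩, rfl⟩
      exact ⟨x, hx1, hx2, hx x hx2⟩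
  have himg2 : (fun x => a * x + c) '' A = (fun y => y + c) '' (a • A) := by
    rw [← Set.image_smul, Set.image_image]
    rfl
  have hvol : volume (segType μ n w) = ENNReal.ofReal (μ ^ n) * volume A := by
    rw [himg, himg2]
    simp only [Set.image_add_right, measure_preimage_add_right,
      MeasureTheory.Measure.addHaar_smul]
    rw [Module.finrank_self, pow_one, ha]
  rw [segLen, hvol, ENNReal.toReal_mul, ENNReal.toReal_ofReal (by positivity)]
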